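/- Let d ≥ 1 and let f : ℝ^d → ℝ be a function which is strictly differentiable at every point (with derivative f'(p) ∈ (ℝ^d)* at p). Suppose the level set S = {p ∈ ℝ^d : f(p) = 0} is compact and nonempty, and that f'(p) ≠ 0 for every p ∈ S. If a vector a ∈ ℝ^d satisfies f'(p)(a) = 0 for every p ∈ S (i.e., a is tangent to the hypersurface S at every point), then a = 0. (This is the paper's argument that a constant vector field which is everywhere tangential to a compact boundary hypersurface Σ must vanish: maximize p ↦ ⟨a, p⟩ over the compact set S and use the Lagrange multiplier rule at the maximizer.) -/

import Mathlib

/-- A constant vector field that is everywhere tangential to a compact regular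
level hypersurface `S = f⁻¹{0}` must vanish. -/
theorem tangent_constant_vector_eq_zero (d : ℕ) (hd : 1 ≤ d)
    (f : EuclideanSpace ℝ (Fin d) → ℝ)
    (f' : EuclideanSpace ℝ (Fin d) → (EuclideanSpace ℝ (Fin d) →L[ℝ] ℝ))
    (hf : ∀ p, HasStrictFDerivAt f (f' p) p)
    (hScomp : IsCompact (f ⁻¹' {0}))
    (hSne : (f ⁻¹' {0}).Nonempty)
    (hreg : ∀ p ∈ f ⁻¹' {0}, f' p ≠ 0)
    (a : EuclideanSpace ℝ (Fin d))
    (ha : ∀ p ∈ f ⁻¹' {0}, f' p a = 0) :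
    a = 0 := by
  set φ : EuclideanSpace ℝ (Fin d) → ℝ := fun p => inner ℝ a p with hφdef
  have hcont : Continuous φ := (innerSL ℝ a).continuous
  obtain ⟨p₀, hp₀S, hmax⟩ := hScomp.exists_isMaxOn hSne hcont.continuousOn
  have hp₀ : f p₀ = 0 := hp₀S
  have hset : f ⁻¹' {0} = {x | f x = f p₀} := by
    ext x; simp [hp₀]
  have hextr : IsLocalExtrOn φ {x | f x = f p₀} p₀ := by
    rw [← hset]
    exact (hmax.localize).isExtr
  have hφ' : HasStrictFDerivAt φ (innerSL ℝ a) p₀ :=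
    (innerSL ℝ a).hasStrictFDerivAt
  obtain ⟨c, b, hcb, heq⟩ :=
    hextr.exists_multipliers_of_hasStrictFDerivAt_1d (hf p₀) hφ'
  have heqa := congrArg (fun L => L a) heq
  simp only [ContinuousLinearMap.add_apply, ContinuousLinearMap.smul_apply,
    ContinuousLinearMap.zero_apply, innerSL_apply_apply, ha p₀ hp₀S, smul_zero,
    zero_add, smul_eq_mul] at heqa
  by_cases hb : b = 0
  · subst hb
    have hc : c ≠ 0 := by
      intro hc; apply hcb; simp [hc]
    have : f' p₀ = 0 := by
      have := heq
      simpa [smul_smul, hc] using congrArg (fun L => c⁻¹ • L) this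
    exact absurd this (hreg p₀ hp₀S)
  · have : (inner ℝ a a : ℝ) = 0 := by
      rw [mul_zero, zero_add] at heqa
      rcases mul_eq_zero.mp heqa with h | h
      · exact absurd h hb
      · simpa [real_inner_self_eq_norm_sq, PiLp.inner_apply] using h
    exact inner_self_eq_zero.mp this
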